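/- If s ∈ ℝ^q satisfies m(s) ≤ m(ŝ), then q(0) − q(s) ≥ (1 − β) α̂ ‖g‖² + (σ/6)‖s‖³. -/

import Mathlib

open scoped RealInnerProductSpace

noncomputable section

/-- `U_I`: extension by zero from block coordinates to full coordinates. -/
def blockIncl {n : ℕ} (I : Finset (Fin n)) :
    EuclideanSpace ℝ ↥I →ₗ[ℝ] EuclideanSpace ℝ (Fin n) where
  toFun s := WithLp.toLp 2 (fun i => if h : i ∈ I then s ⟨i, h⟩ else 0)
  map_add' s t := by ext i; by_cases h : i ∈ I <;> simp [h]
  map_smul' c s := by ext i; by_cases h : i ∈ I <;> simp [h]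

/-- `U_Iᵀ`: restriction of a vector to the block coordinates. -/
def blockRestr {n : ℕ} (I : Finset (Fin n)) :
    EuclideanSpace ℝ (Fin n) →ₗ[ℝ] EuclideanSpace ℝ ↥I where
  toFun x := WithLp.toLp 2 (fun i => x i)
  map_add' x y := by ext i; simp
  map_smul' c x := by ext i; simp

/-- Block Hessian `U_Iᵀ H U_I` as a continuous linear map. -/
def blockHess {n : ℕ} (I : Finset (Fin n))
    (H : EuclideanSpace ℝ (Fin n) →L[ℝ] EuclideanSpace ℝ (Fin n)) :
    EuclideanSpace ℝ ↥I →L[ℝ] EuclideanSpace ℝ ↥I :=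
  LinearMap.toContinuousLinearMap
    ((blockRestr I) ∘ₗ ((H : EuclideanSpace ℝ (Fin n) →ₗ[ℝ] EuclideanSpace ℝ (Fin n)) ∘ₗ blockIncl I))

/-- Quadratic model `q(s) = f₀ + gᵀs + (1/2) sᵀ H s`. -/
def quadModel {E : Type*} [NormedAddCommGroup E] [InnerProductSpace ℝ E]
    (f₀ : ℝ) (g : E) (H : E →L[ℝ] E) (s : E) : ℝ :=
  f₀ + ⟪g, s⟫ + (1 / 2) * ⟪s, H s⟫

/-- Cubic model `m(s) = q(s) + (σ/6) ‖s‖³`. -/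
def cubicModel {E : Type*} [NormedAddCommGroup E] [InnerProductSpace ℝ E]
    (f₀ : ℝ) (g : E) (H : E →L[ℝ] E) (σ : ℝ) (s : E) : ℝ :=
  quadModel f₀ g H s + σ / 6 * ‖s‖ ^ 3

/-- Gradient of the cubic model: `∇m(s) = g + H s + (σ/2) ‖s‖ s`. -/
def cubicModelGrad {E : Type*} [NormedAddCommGroup E] [InnerProductSpace ℝ E]
    (g : E) (H : E →L[ℝ] E) (σ : ℝ) (s : E) : E :=
  g + H s + (σ / 2 * ‖s‖) • s

/-- The stepsize `α̂ = min{β/‖H‖, √(3β/(σ‖g‖))}`, the first argument being `+∞` if `H = 0`. -/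
def alphaHat {E : Type*} [NormedAddCommGroup E] [InnerProductSpace ℝ E]
    (β σ : ℝ) (g : E) (H : E →L[ℝ] E) : ℝ :=
  haveI := Classical.dec (H = 0)
  if H = 0 then Real.sqrt (3 * β / (σ * ‖g‖))
  else min (β / ‖H‖) (Real.sqrt (3 * β / (σ * ‖g‖)))

/-- The Cauchy-like point `ŝ = -α̂ g`. -/
def sHat {E : Type*} [NormedAddCommGroup E] [InnerProductSpace ℝ E]
    (β σ : ℝ) (g : E) (H : E →L[ℝ] E) : E :=
  -(alphaHat β σ g H) • g

theorem stmt6 (q : ℕ) (g : EuclideanSpace ℝ (Fin q)) (hg : g ≠ 0)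
    (H : EuclideanSpace ℝ (Fin q) →L[ℝ] EuclideanSpace ℝ (Fin q))
    (hH : ∀ u v, ⟪H u, v⟫ = ⟪u, H v⟫)
    (f₀ σ β : ℝ) (hσ : 0 < σ) (hβ0 : 0 < β) (hβ1 : β < 1)
    (s : EuclideanSpace ℝ (Fin q))
    (hs : cubicModel f₀ g H σ s ≤ cubicModel f₀ g H σ (sHat β σ g H)) :
    (1 - β) * alphaHat β σ g H * ‖g‖ ^ 2 + σ / 6 * ‖s‖ ^ 3 ≤
      quadModel f₀ g H 0 - quadModel f₀ g H s := by
  set a := alphaHat β σ g H with ha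
  have hgn : (0:ℝ) < ‖g‖ := norm_pos_iff.mpr hg
  have ha0 : 0 ≤ a := by
    rw [ha, alphaHat]
    split_ifs
    · exact Real.sqrt_nonneg _
    · exact le_min (div_nonneg hβ0.le (norm_nonneg _)) (Real.sqrt_nonneg _)
  have hale : a ≤ Real.sqrt (3 * β / (σ * ‖g‖)) := by
    rw [ha, alphaHat]
    split_ifs
    · exact le_rfl
    · exact min_le_right _ _
  have hsq : a ^ 2 ≤ 3 * β / (σ * ‖g‖) := by
    have := pow_le_pow_left₀ ha0 hale 2
    rwa [Real.sq_sqrt (by positivity)] at this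
  have hsq' : a ^ 2 * (σ * ‖g‖) ≤ 3 * β := by
    rw [div_eq_mul_inv] at hsq
    have h1 : (0:ℝ) < σ * ‖g‖ := by positivity
    calc a ^ 2 * (σ * ‖g‖) ≤ 3 * β * (σ * ‖g‖)⁻¹ * (σ * ‖g‖) :=
          mul_le_mul_of_nonneg_right hsq h1.le
      _ = 3 * β := by field_simp
  have hlin : a * ‖H‖ ≤ β := by
    by_cases hH0 : H = 0
    · rw [hH0, norm_zero, mul_zero]; exact hβ0.le
    · have hHn : (0:ℝ) < ‖H‖ := lt_of_le_of_ne (norm_nonneg H) (fun e => hH0 (norm_eq_zero.mp e.symm))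
      have h1 : a ≤ β / ‖H‖ := by
        rw [ha, alphaHat]; rw [if_neg hH0]; exact min_le_left _ _
      calc a * ‖H‖ ≤ (β / ‖H‖) * ‖H‖ := mul_le_mul_of_nonneg_right h1 hHn.le
        _ = β := div_mul_cancel₀ β hHn.ne'
  have hT : ⟪g, H g⟫ ≤ ‖H‖ * ‖g‖ ^ 2 := by
    have h1 := real_inner_le_norm g (H g)
    have h2 := H.le_opNorm g
    nlinarith [norm_nonneg g, norm_nonneg (H g)]
  have hshat : cubicModel f₀ g H σ (sHat β σ g H) =
      f₀ - a * ‖g‖ ^ 2 + (1 / 2) * (a ^ 2 * ⟪g, H g⟫) + σ / 6 * (a * ‖g‖) ^ 3 := by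
    simp only [cubicModel, quadModel, sHat, ← ha, neg_smul, inner_neg_right, inner_neg_left,
      real_inner_smul_right, real_inner_smul_left, map_smul, map_neg, norm_neg, norm_smul,
      Real.norm_eq_abs, abs_of_nonneg ha0, real_inner_self_eq_norm_sq]
    ring
  have key : cubicModel f₀ g H σ (sHat β σ g H) ≤ f₀ - (1 - β) * a * ‖g‖ ^ 2 := by
    rw [hshat]
    have hcub : σ / 6 * (a * ‖g‖) ^ 3 ≤ β / 2 * a * ‖g‖ ^ 2 := by
      have h1 : σ / 6 * (a * ‖g‖) ^ 3 = (a ^ 2 * (σ * ‖g‖)) * (a * ‖g‖ ^ 2) / 6 := by ring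
      rw [h1]
      have h2 : a * ‖g‖ ^ 2 ≥ 0 := by positivity
      nlinarith
    have hquad : (1 / 2) * (a ^ 2 * ⟪g, H g⟫) ≤ β / 2 * a * ‖g‖ ^ 2 := by
      nlinarith [sq_nonneg a, mul_le_mul_of_nonneg_left hT (mul_nonneg (mul_nonneg ha0 ha0) (by norm_num : (0:ℝ) ≤ 1/2)), mul_nonneg ha0 (sq_nonneg ‖g‖)]
    linarith
  have hq0 : quadModel f₀ g H 0 = f₀ := by simp [quadModel]
  have hs' : quadModel f₀ g H s + σ / 6 * ‖s‖ ^ 3 ≤ f₀ - (1 - β) * a * ‖g‖ ^ 2 := by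
    have := hs
    rw [cubicModel] at this
    linarith
  rw [hq0]
  linarith

end
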